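/- Let D : ℕ⁻¹ → [1,∞), let C₈ ≥ 1, n₀ ∈ ℕ, a > 0, and ε > 0. Assume: (i) there exists C_ε ≥ 1 such that D(δ) ≤ C_ε·δ^{−ε} for all δ ∈ ℕ⁻¹; and (ii) for every C ≥ 1, if D(δ) ≤ C·δ^{−ε} for all δ ∈ ℕ⁻¹, then D(δ) ≤ C₈·2^{n₀·3^{10a/ε}}·C^{1−3^{−a/ε}}·δ^{−ε} for all δ ∈ ℕ⁻¹. Then D(δ) ≤ C₈^{3^{a/ε}}·2^{n₀·3^{11a/ε}}·δ^{−ε} for all δ ∈ ℕ⁻¹. -/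

import Mathlib

open Real

noncomputable section

/-- `δ ∈ ℕ⁻¹ = {1/n : n ∈ ℕ}`. -/
def NatRecip (δ : ℝ) : Prop := ∃ n : ℕ, 0 < n ∧ δ = 1 / n

theorem stmt17 (D : ℝ → ℝ) (C₈ : ℝ) (n₀ : ℕ) (a ε : ℝ)
    (hC₈ : 1 ≤ C₈) (ha : 0 < a) (hε : 0 < ε)
    (hD : ∀ δ : ℝ, NatRecip δ → 1 ≤ D δ)
    (h1 : ∃ Cε : ℝ, 1 ≤ Cε ∧ ∀ δ : ℝ, NatRecip δ → D δ ≤ Cε * δ ^ (-ε))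
    (h2 : ∀ C : ℝ, 1 ≤ C → (∀ δ : ℝ, NatRecip δ → D δ ≤ C * δ ^ (-ε)) →
      ∀ δ : ℝ, NatRecip δ →
        D δ ≤ C₈ * 2 ^ ((n₀:ℝ) * 3 ^ (10*a/ε)) * C ^ (1 - (3:ℝ) ^ (-(a/ε))) * δ ^ (-ε)) :
    ∀ δ : ℝ, NatRecip δ →
      D δ ≤ C₈ ^ ((3:ℝ) ^ (a/ε)) * 2 ^ ((n₀:ℝ) * 3 ^ (11*a/ε)) * δ ^ (-ε) := by
  obtain ⟨Cε, hCε, hCεD⟩ := h1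
  set s : ℝ := (3:ℝ) ^ (a/ε) with hs
  have hae : 0 < a / ε := div_pos ha hε
  have hs1 : 1 < s := (Real.one_lt_rpow_iff_of_pos (by norm_num)).2 (Or.inl ⟨by norm_num, hae⟩)
  have hs0 : 0 < s := lt_trans one_pos hs1
  set θ : ℝ := 1 - (3:ℝ) ^ (-(a/ε)) with hθdef
  have h3inv : (3:ℝ) ^ (-(a/ε)) = s⁻¹ := Real.rpow_neg (by norm_num) _
  have hθ0 : 0 < θ := by
    rw [hθdef, h3inv]; have := inv_lt_one_of_one_lt₀ hs1; linarith
  have hθ1 : θ < 1 := by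
    rw [hθdef, h3inv]; have := inv_pos.2 hs0; linarith
  set K : ℝ := C₈ * 2 ^ ((n₀:ℝ) * 3 ^ (10*a/ε)) with hKdef
  have h2pow : (1:ℝ) ≤ 2 ^ ((n₀:ℝ) * 3 ^ (10*a/ε)) :=
    Real.one_le_rpow (by norm_num) (by positivity)
  have hK1 : 1 ≤ K := by rw [hKdef]; nlinarith
  have hK0 : 0 < K := lt_of_lt_of_le one_pos hK1
  set M : ℝ := K ^ s with hMdef
  have hM1 : 1 ≤ M := Real.one_le_rpow hK1 hs0.le
  have hM0 : 0 < M := lt_of_lt_of_le one_pos hM1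
  -- the fixed point equation K * M^θ = M
  have hfix : K * M ^ θ = M := by
    rw [hMdef, ← Real.rpow_mul hK0.le]
    nth_rewrite 1 [← Real.rpow_one K]
    rw [← Real.rpow_add hK0]
    congr 1
    rw [hθdef, h3inv]
    field_simp
    ring
  -- the target constant equals M
  have hpowadd : (3:ℝ) ^ (10*a/ε) * s = (3:ℝ) ^ (11*a/ε) := by
    rw [hs, ← Real.rpow_add (by norm_num)]
    congr 1; ring
  have htarget : C₈ ^ s * 2 ^ ((n₀:ℝ) * 3 ^ (11*a/ε)) = M := by
    rw [hMdef, hKdef, Real.mul_rpow (by linarith) (by positivity),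
      ← Real.rpow_mul (by norm_num : (0:ℝ) ≤ 2), mul_assoc, hpowadd]
  set B : ℝ := max Cε M with hBdef
  have hB1 : 1 ≤ B := le_trans hCε (le_max_left _ _)
  have hB0 : 0 < B := lt_of_lt_of_le one_pos hB1
  have hind : ∀ k : ℕ, ∀ δ : ℝ, NatRecip δ → D δ ≤ M * B ^ (θ ^ k) * δ ^ (-ε) := by
    intro k
    induction k with
    | zero =>
      intro δ hδ
      refine le_trans (hCεD δ hδ) ?_
      have hδ0 : 0 < δ ^ (-ε) := by
        obtain ⟨n, hn, rfl⟩ := hδ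
        positivity
      have hCB : Cε ≤ M * B ^ (θ ^ 0) := by
        rw [pow_zero, Real.rpow_one]
        have h1 : Cε ≤ B := le_max_left _ _
        nlinarith
      exact mul_le_mul_of_nonneg_right hCB hδ0.le
    | succ k ih =>
      intro δ hδ
      have hBp : (1:ℝ) ≤ B ^ (θ ^ k) := Real.one_le_rpow hB1 (by positivity)
      have hC1 : 1 ≤ M * B ^ (θ ^ k) := by nlinarith
      refine le_trans (h2 _ hC1 ih δ hδ) (le_of_eq ?_)
      congr 1
      rw [Real.mul_rpow hM0.le (by positivity), ← Real.rpow_mul hB0.le,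
        ← pow_succ θ k, ← mul_assoc, hfix]
  intro δ hδ
  rw [htarget]
  have hlim : Filter.Tendsto (fun k : ℕ => M * B ^ (θ ^ k) * δ ^ (-ε)) Filter.atTop
      (nhds (M * B ^ (0:ℝ) * δ ^ (-ε))) := by
    apply Filter.Tendsto.mul_const
    apply Filter.Tendsto.const_mul
    exact (Real.continuousAt_const_rpow hB0.ne').tendsto.comp
      (tendsto_pow_atTop_nhds_zero_of_lt_one hθ0.le hθ1)
  rw [Real.rpow_zero, mul_one] at hlim
  exact ge_of_tendsto hlim (Filter.Eventually.of_forall fun k => hind k δ hδ)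

end
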